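/- Under the assumptions of the basic-equation setup, if γ_n = |z_n^+ − z_n^-| ≠ 0 and β_n^-(z_n^+)·β_n^+(z_n^+) ≠ 0, then with t_n = |β_n^+(z_n^+)|/|β_n^-(z_n^+)| and a sequence η_n ↓ 0 (η_n = 7ε_n), γ_n ≥ (2√t_n/(1+t_n) − η_n)(|β_n^-(z_n^*)| + |β_n^+(z_n^*)|), where z_n^* = (z_n^+ + z_n^-)/2. -/

import Mathlib

lemma lip_aux (f f' : ℂ → ℂ) (zm zp : ℂ) (ε : ℝ)
    (hd : ∀ z ∈ segment ℝ zm zp, HasDerivAt f (f' z) z)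
    (hb : ∀ z ∈ segment ℝ zm zp, ‖f' z‖ ≤ ε)
    (u v : ℂ) (hu : u ∈ segment ℝ zm zp) (hv : v ∈ segment ℝ zm zp) :
    ‖f u - f v‖ ≤ ε * ‖u - v‖ := by
  exact (convex_segment zm zp).norm_image_sub_le_of_norm_hasFDerivWithin_le
    (f' := fun z => ((ContinuousLinearMap.smulRight (1 : ℂ →L[ℂ] ℂ) (f' z)).restrictScalars ℝ))
    (fun x hx => ((hd x hx).hasFDerivAt.restrictScalars ℝ).hasFDerivWithinAt)
    (fun x hx => by
      rw [ContinuousLinearMap.norm_restrictScalars, ContinuousLinearMap.norm_smulRight_apply]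
      simpa using hb x hx)
    hv hu

lemma alg_aux (a b : ℝ) (ha : 0 < a) (hb : 0 < b) :
    2 * Real.sqrt (b / a) / (1 + b / a) * (a + b) = 2 * Real.sqrt (a * b) := by
  have hsa : (0:ℝ) < Real.sqrt a := Real.sqrt_pos.2 ha
  have hsb : (0:ℝ) < Real.sqrt b := Real.sqrt_pos.2 hb
  have ha2 : Real.sqrt a ^ 2 = a := Real.sq_sqrt ha.le
  have hb2 : Real.sqrt b ^ 2 = b := Real.sq_sqrt hb.le
  rw [Real.sqrt_div' b ha.le, Real.sqrt_mul ha.le]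
  rw [← ha2, ← hb2]
  have h1 : (1 : ℝ) + Real.sqrt b ^ 2 / Real.sqrt a ^ 2 ≠ 0 := by positivity
  field_simp
  rw [Real.sqrt_sq hsa.le] at *

set_option maxHeartbeats 1000000 in
/-- Lemma 32.1 of the paper (lower bound for the gap): if `γ_n ≠ 0` and
`β_n^-(z_n^+)·β_n^+(z_n^+) ≠ 0`, then with `t_n = |β_n^+(z_n^+)|/|β_n^-(z_n^+)|` and
`η_n = 7 ε_n`, one has
`γ_n ≥ (2√t_n/(1+t_n) − η_n)(|β_n^-(z_n^*)| + |β_n^+(z_n^*)|)`, `z_n^* = (z_n^+ + z_n^-)/2`. -/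
theorem gap_lower_bound (α βp βm α' βp' βm' : ℂ → ℂ) (zp zm : ℂ) (ε : ℝ)
    (hε0 : 0 ≤ ε) (hε : ε < 1 / 2)
    (hrootp : (zp - α zp) ^ 2 = βm zp * βp zp)
    (hrootm : (zm - α zm) ^ 2 = βm zm * βp zm)
    (hderiv : ∀ z ∈ segment ℝ zm zp,
      HasDerivAt α (α' z) z ∧ HasDerivAt βp (βp' z) z ∧ HasDerivAt βm (βm' z) z)
    (hbound : ∀ z ∈ segment ℝ zm zp, ‖α' z‖ ≤ ε ∧ ‖βp' z‖ ≤ ε ∧ ‖βm' z‖ ≤ ε)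
    (hγ : zp ≠ zm) (hBB : βm zp * βp zp ≠ 0) :
    (2 * Real.sqrt (‖βp zp‖ / ‖βm zp‖) / (1 + ‖βp zp‖ / ‖βm zp‖) - 7 * ε) *
        (‖βm ((zp + zm) / 2)‖ + ‖βp ((zp + zm) / 2)‖) ≤ ‖zp - zm‖ := by
  obtain ⟨hβm0, hβp0⟩ := mul_ne_zero_iff.mp hBB
  set a := ‖βm zp‖ with ha_def
  set b := ‖βp zp‖ with hb_def
  set γ := ‖zp - zm‖ with hγ_def
  set c := 2 * Real.sqrt (b / a) / (1 + b / a) with hc_def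
  have ha : 0 < a := norm_pos_iff.mpr hβm0
  have hb : 0 < b := norm_pos_iff.mpr hβp0
  have hγ0 : 0 < γ := norm_pos_iff.mpr (sub_ne_zero.mpr hγ)
  clear_value a b γ c
  -- membership in the segment
  have hmp : zp ∈ segment ℝ zm zp := right_mem_segment ℝ zm zp
  have hmm : zm ∈ segment ℝ zm zp := left_mem_segment ℝ zm zp
  have hmid : ((zp + zm) / 2 : ℂ) ∈ segment ℝ zm zp := by
    refine ⟨1/2, 1/2, by norm_num, by norm_num, by norm_num, ?_⟩
    push_cast [Complex.real_smul]
    ring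
  -- Lipschitz estimates
  have lipα : ∀ u ∈ segment ℝ zm zp, ∀ v ∈ segment ℝ zm zp, ‖α u - α v‖ ≤ ε * ‖u - v‖ :=
    fun u hu v hv => lip_aux α α' zm zp ε (fun z hz => (hderiv z hz).1)
      (fun z hz => (hbound z hz).1) u v hu hv
  have lipβp : ∀ u ∈ segment ℝ zm zp, ∀ v ∈ segment ℝ zm zp, ‖βp u - βp v‖ ≤ ε * ‖u - v‖ :=
    fun u hu v hv => lip_aux βp βp' zm zp ε (fun z hz => (hderiv z hz).2.1)
      (fun z hz => (hbound z hz).2.1) u v hu hv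
  have lipβm : ∀ u ∈ segment ℝ zm zp, ∀ v ∈ segment ℝ zm zp, ‖βm u - βm v‖ ≤ ε * ‖u - v‖ :=
    fun u hu v hv => lip_aux βm βm' zm zp ε (fun z hz => (hderiv z hz).2.2)
      (fun z hz => (hbound z hz).2.2) u v hu hv
  -- distances
  have hmidp : ‖((zp + zm) / 2 : ℂ) - zp‖ = γ / 2 := by
    rw [hγ_def]
    have h1 : ((zp + zm) / 2 : ℂ) - zp = -((zp - zm) / 2) := by ring
    rw [h1, norm_neg, norm_div]
    have h2 : ‖(2:ℂ)‖ = 2 := by norm_num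
    rw [h2]
  have hmz : ‖(zm : ℂ) - zp‖ = γ := by rw [hγ_def, norm_sub_rev]
  -- Lipschitz consequences
  have hbm_mid : ‖βm ((zp + zm) / 2) - βm zp‖ ≤ ε * (γ / 2) := by
    have := lipβm _ hmid _ hmp; rwa [hmidp] at this
  have hbp_mid : ‖βp ((zp + zm) / 2) - βp zp‖ ≤ ε * (γ / 2) := by
    have := lipβp _ hmid _ hmp; rwa [hmidp] at this
  have hbm_m : ‖βm zm - βm zp‖ ≤ ε * γ := by
    have := lipβm _ hmm _ hmp; rwa [hmz] at this
  have hbp_m : ‖βp zm - βp zp‖ ≤ ε * γ := by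
    have := lipβp _ hmm _ hmp; rwa [hmz] at this
  have hα_m : ‖α zp - α zm‖ ≤ ε * γ := by
    rw [hγ_def]; exact lipα _ hmp _ hmm
  set ζp := zp - α zp with hζp_def
  set ζm := zm - α zm with hζm_def
  -- norms of the roots of the basic equation
  have hζp_sq : ‖ζp‖ ^ 2 = a * b := by
    rw [ha_def, hb_def, hζp_def, ← norm_pow, hrootp, norm_mul]
  have hζm_sq : ‖ζm‖ ^ 2 = ‖βm zm‖ * ‖βp zm‖ := by
    rw [hζm_def, ← norm_pow, hrootm, norm_mul]
  have hζp_norm : ‖ζp‖ = Real.sqrt (a * b) := by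
    rw [← hζp_sq, Real.sqrt_sq (norm_nonneg _)]
  have hcS : c * (a + b) = 2 * ‖ζp‖ := by
    rw [hζp_norm, hc_def]; exact alg_aux a b ha hb
  -- difference of roots
  have hde : ζp - ζm = (zp - zm) - (α zp - α zm) := by
    rw [hζp_def, hζm_def]; ring
  have hd_ge : (1 - ε) * γ ≤ ‖ζp - ζm‖ := by
    have h := norm_sub_norm_le (zp - zm) (α zp - α zm)
    rw [← hde, ← hγ_def] at h
    linarith only [h, hα_m]
  have hd_le : ‖ζp - ζm‖ ≤ (1 + ε) * γ := by
    have h := norm_sub_le (zp - zm) (α zp - α zm)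
    rw [← hde, ← hγ_def] at h
    linarith only [h, hα_m]
  clear_value ζp ζm
  -- bound on βp zm, βm zm
  have hbpzm : ‖βp zm‖ ≤ b + ε * γ := by
    have := norm_sub_norm_le (βp zm) (βp zp)
    rw [← hb_def] at this
    linarith [hbp_m]
  have hbmzm : ‖βm zm‖ ≤ a + ε * γ := by
    have := norm_sub_norm_le (βm zm) (βm zp)
    rw [← ha_def] at this
    linarith [hbm_m]
  -- product bound: ‖ζp−ζm‖‖ζp+ζm‖ ≤ εγ(a+b+εγ)
  have hfact : (ζp - ζm) * (ζp + ζm) = βm zp * (βp zp - βp zm) + (βm zp - βm zm) * βp zm := by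
    linear_combination hrootp - hrootm
  have hprod : ‖ζp - ζm‖ * ‖ζp + ζm‖ ≤ ε * γ * ((a + b) + ε * γ) := by
    have h1 : ‖ζp - ζm‖ * ‖ζp + ζm‖
        ≤ ‖βm zp‖ * ‖βp zp - βp zm‖ + ‖βm zp - βm zm‖ * ‖βp zm‖ := by
      rw [← norm_mul, ← norm_mul, ← norm_mul, hfact]
      exact norm_add_le _ _
    rw [← ha_def] at h1
    have h2 : ‖βp zp - βp zm‖ ≤ ε * γ := by rw [norm_sub_rev]; exact hbp_m
    have h3 : ‖βm zp - βm zm‖ ≤ ε * γ := by rw [norm_sub_rev]; exact hbm_m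
    have h4 : a * ‖βp zp - βp zm‖ ≤ a * (ε * γ) :=
      mul_le_mul_of_nonneg_left h2 ha.le
    have h5 : ‖βm zp - βm zm‖ * ‖βp zm‖ ≤ (ε * γ) * (b + ε * γ) :=
      mul_le_mul h3 hbpzm (norm_nonneg _) (by positivity)
    linarith only [h1, h4, h5]
  -- ‖ζp‖ ≤ (a+b)/2
  have hζp_le : ‖ζp‖ ≤ (a + b) / 2 := by
    nlinarith [hζp_sq, norm_nonneg ζp, sq_nonneg (a - b), sq_nonneg (‖ζp‖ - (a + b) / 2)]
  -- ‖ζm‖ ≤ (a+b+2εγ)/2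
  have hζm_le : ‖ζm‖ ≤ ((a + b) + 2 * ε * γ) / 2 := by
    have h6 : ‖βm zm‖ * ‖βp zm‖ ≤ (a + ε * γ) * (b + ε * γ) :=
      mul_le_mul hbmzm hbpzm (norm_nonneg _) (by positivity)
    nlinarith [hζm_sq, norm_nonneg ζm, sq_nonneg (a - b),
      sq_nonneg (‖ζm‖ - ((a + b) + 2 * ε * γ) / 2)]
  -- key B : (1-2ε)γ ≤ a+b
  have hB : (1 - 2 * ε) * γ ≤ a + b := by
    have hd_tri := norm_sub_le ζp ζm
    linarith only [hd_ge, hd_tri, hζp_le, hζm_le]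
  -- sum bound : ‖ζp+ζm‖(1-ε) ≤ ε(a+b+εγ)
  have hs1 : ‖ζp + ζm‖ * (1 - ε) ≤ ε * ((a + b) + ε * γ) := by
    have t1 : ‖ζp + ζm‖ * ((1 - ε) * γ) ≤ ‖ζp + ζm‖ * ‖ζp - ζm‖ :=
      mul_le_mul_of_nonneg_left hd_ge (norm_nonneg _)
    have h7 : (‖ζp + ζm‖ * (1 - ε)) * γ ≤ (ε * ((a + b) + ε * γ)) * γ := by
      linarith only [t1, hprod]
    exact le_of_mul_le_mul_right h7 hγ0
  -- key A : c(a+b)(1-ε) ≤ γ + ε(a+b)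
  have htri : 2 * ‖ζp‖ ≤ ‖ζp - ζm‖ + ‖ζp + ζm‖ := by
    have h1 : (ζp - ζm) + (ζp + ζm) = (2 : ℂ) * ζp := by ring
    have h2 := norm_add_le (ζp - ζm) (ζp + ζm)
    rw [h1, norm_mul] at h2
    simpa using h2
  have h1ε : (0:ℝ) ≤ 1 - ε := by linarith
  have hA : c * (a + b) * (1 - ε) ≤ γ + ε * (a + b) := by
    have t1 := mul_le_mul_of_nonneg_right htri h1ε
    have t2 := mul_le_mul_of_nonneg_right hd_le h1ε
    have t0 := mul_le_mul_of_nonneg_right hcS.le h1ε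
    linarith only [t0, t1, t2, hs1]
  -- c ≤ 1
  have ht : (0:ℝ) < b / a := by positivity
  have hc1 : c ≤ 1 := by
    rw [hc_def, div_le_one (by positivity)]
    nlinarith [sq_nonneg (Real.sqrt (b / a) - 1), Real.sq_sqrt ht.le]
  have hcnn : 0 ≤ c := by
    rw [hc_def]; positivity
  -- sum at the midpoint
  have hSs : ‖βm ((zp + zm) / 2)‖ + ‖βp ((zp + zm) / 2)‖ ≤ (a + b) + ε * γ := by
    have h1 := norm_sub_norm_le (βm ((zp + zm) / 2)) (βm zp)
    have h2 := norm_sub_norm_le (βp ((zp + zm) / 2)) (βp zp)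
    rw [← ha_def] at h1
    rw [← hb_def] at h2
    linarith [hbm_mid, hbp_mid]
  -- final case analysis
  rcases le_or_gt c (7 * ε) with hcase | hcase
  · have h1 : c - 7 * ε ≤ 0 := by linarith
    have h2 : (0:ℝ) ≤ ‖βm ((zp + zm) / 2)‖ + ‖βp ((zp + zm) / 2)‖ := by positivity
    calc (c - 7 * ε) * (‖βm ((zp + zm) / 2)‖ + ‖βp ((zp + zm) / 2)‖)
        ≤ 0 := mul_nonpos_of_nonpos_of_nonneg h1 h2
      _ ≤ γ := hγ0.le
  · have hε7 : ε < 1 / 7 := by linarith only [hcase, hc1]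
    have t3 : 0 ≤ ε * (6 - 7 * ε) * ((a + b) - (1 - 2 * ε) * γ) := by
      apply mul_nonneg (mul_nonneg hε0 (by linarith)) (by linarith)
    have t4 : 0 ≤ ε * γ * (1 - ε) * (2 - 7 * ε) := by
      apply mul_nonneg (mul_nonneg (mul_nonneg hε0 hγ0.le) (by linarith)) (by linarith)
    have hN : 0 ≤ (γ - (c - 7 * ε) * (a + b) - ε * γ) * (1 - ε) := by
      linarith only [hA, t3, t4]
    have hN' : 0 ≤ γ - (c - 7 * ε) * (a + b) - ε * γ := by
      by_contra hX
      push_neg at hX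
      have hneg : (γ - (c - 7 * ε) * (a + b) - ε * γ) * (1 - ε) < 0 :=
        mul_neg_of_neg_of_pos hX (by linarith)
      linarith only [hN, hneg]
    have e1 : (c - 7 * ε) * (‖βm ((zp + zm) / 2)‖ + ‖βp ((zp + zm) / 2)‖)
        ≤ (c - 7 * ε) * ((a + b) + ε * γ) :=
      mul_le_mul_of_nonneg_left hSs (by linarith)
    have e2 : 0 ≤ ε * γ * (1 - (c - 7 * ε)) :=
      mul_nonneg (mul_nonneg hε0 hγ0.le) (by linarith)
    linarith only [e1, hN', e2]
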